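/- Let Ω ⊂ ℝⁿ be bounded open, 1 < p ≤ n, q ∈ (n/p, ∞], and μ a nonnegative measure on Ω with finite Morrey norm ‖μ‖_{M^q(Ω)}. Then ∫_Ω W_{1,p}^{2 diam(Ω)} μ(x) dμ(x) ≤ C ‖μ‖_{M^q(Ω)}^{p/(p−1)} diam(Ω)^{n + (1 − n/q)·p/(p−1)}, where W_{1,p}^R μ(x) = ∫_0^R (μ(B(x,t))/t^{n−p})^{1/(p−1)} dt/t and C depends only on n, p, q. -/

import Mathlib

open MeasureTheory Metric Set
open scoped ENNReal NNReal

/-- **Wolff energy bound for a Morrey measure.**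
Let `Ω ⊂ ℝⁿ` be bounded open, `1 < p ≤ n`, `q ∈ (n/p, ∞]`, and `μ` a nonnegative measure on
`Ω` with Morrey bound `μ(Ω ∩ B(x,r)) ≤ M r^{n/q'}` (`n/q' = n(1−1/q)`).  Then
`∫_Ω W_{1,p}^{2 diam Ω} μ dμ ≤ C M^{p/(p−1)} (diam Ω)^{n + (1 − n/q)p/(p−1)}`, where
`W_{1,p}^R μ(x) = ∫_0^R (μ(B(x,t))/t^{n−p})^{1/(p−1)} dt/t` and `C = C(n,p,q)`. -/
theorem wolff_energy_bound (n : ℕ) (p : ℝ) (hp : 1 < p) (hpn : p ≤ (n : ℝ))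
    (q : ℝ≥0∞) (hq : ENNReal.ofReal ((n : ℝ) / p) < q) :
    ∃ C > (0 : ℝ), ∀ (Ω : Set (EuclideanSpace ℝ (Fin n))),
      IsOpen Ω → Bornology.IsBounded Ω →
      ∀ μ : Measure (EuclideanSpace ℝ (Fin n)), μ Ωᶜ = 0 →
      ∀ M : ℝ, 0 ≤ M →
      (∀ (x : EuclideanSpace ℝ (Fin n)) (r : ℝ), 0 < r →
        μ (Ω ∩ ball x r) ≤ ENNReal.ofReal (M * r ^ ((n : ℝ) * (1 - 1 / q.toReal)))) →
      ∫⁻ x in Ω,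
          (∫⁻ t in Ioc (0 : ℝ) (2 * diam Ω),
            (μ (ball x t) / ENNReal.ofReal (t ^ ((n : ℝ) - p))) ^ (1 / (p - 1))
              * ENNReal.ofReal t⁻¹) ∂μ
        ≤ ENNReal.ofReal
            (C * M ^ (p / (p - 1))
              * diam Ω ^ ((n : ℝ) + (1 - (n : ℝ) / q.toReal) * p / (p - 1))) := by
  have hp1 : (0:ℝ) < p - 1 := by linarith
  have hn1 : (1:ℝ) < n := lt_of_lt_of_le hp hpn
  set qr := q.toReal with hqrdef
  have hqr0 : 0 ≤ qr := ENNReal.toReal_nonneg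
  -- `n/qr < p`
  have hnqr : (n:ℝ)/qr < p := by
    rcases eq_or_ne q ⊤ with h | h
    · simp only [hqrdef, h, ENNReal.toReal_top, div_zero]
      linarith
    · have h1 : (n:ℝ)/p < qr := by
        rw [← ENNReal.ofReal_lt_iff_lt_toReal (by positivity) h]
        exact hq
      have hqrpos : 0 < qr := lt_trans (by positivity) h1
      rw [div_lt_iff₀ hqrpos]
      rw [div_lt_iff₀ (by linarith : (0:ℝ) < p)] at h1
      nlinarith
  set a : ℝ := (n:ℝ) * (1 - 1/qr) with ha
  set β : ℝ := (p - (n:ℝ)/qr)/(p-1) with hβdef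
  set E : ℝ := (n:ℝ) + (1 - (n:ℝ)/qr) * p / (p-1) with hE
  have hβ : 0 < β := div_pos (by linarith) hp1
  have hβE : β + a = E := by
    rcases eq_or_ne qr 0 with h0 | h0
    · simp only [hβdef, ha, hE, h0, div_zero]
      field_simp
      ring
    · rw [hβdef, ha, hE]
      field_simp
      ring
  refine ⟨(2:ℝ)^E/β, div_pos (Real.rpow_pos_of_pos two_pos E) hβ, ?_⟩
  intro Ω hΩo hΩb μ hμc M hM hMor
  rcases eq_empty_or_nonempty Ω with hΩ | ⟨x₀, hx₀⟩
  · simp only [hΩ, Measure.restrict_empty, lintegral_zero_measure]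
    exact bot_le
  -- diam Ω > 0
  obtain ⟨ε, hε, hballs⟩ := Metric.isOpen_iff.1 hΩo x₀ hx₀
  have hn0 : 0 < n := by exact_mod_cast lt_trans zero_lt_one hn1
  set D := diam Ω with hD
  have hDpos : 0 < D := by
    set v : EuclideanSpace ℝ (Fin n) := EuclideanSpace.single (⟨0, hn0⟩ : Fin n) (ε/2) with hv
    have hvnorm : ‖v‖ = ε/2 := by
      rw [hv, EuclideanSpace.norm_single, Real.norm_eq_abs, abs_of_pos (by linarith)]
    have hy : x₀ + v ∈ Ω := by
      apply hballs
      rw [mem_ball, dist_self_add_left, hvnorm]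
      linarith
    have := dist_le_diam_of_mem hΩb hy hx₀
    rw [dist_self_add_left] at this
    · rw [hvnorm] at this; linarith
  have h2D : (0:ℝ) < 2*D := by linarith
  -- total mass bound
  have hμΩ : μ Ω ≤ ENNReal.ofReal (M * (2*D)^a) := by
    have hsub : Ω ⊆ ball x₀ (2*D) := fun y hy =>
      mem_ball.2 (lt_of_le_of_lt (dist_le_diam_of_mem hΩb hy hx₀) (by linarith))
    calc μ Ω = μ (Ω ∩ ball x₀ (2*D)) := by rw [inter_eq_self_of_subset_left hsub]
      _ ≤ _ := hMor x₀ (2*D) h2D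
  -- ball bound
  have hballbd : ∀ (x : EuclideanSpace ℝ (Fin n)) (t : ℝ), 0 < t →
      μ (ball x t) ≤ ENNReal.ofReal (M * t ^ a) := by
    intro x t ht
    have h0 : μ (ball x t \ Ω) = 0 :=
      measure_mono_null (diff_subset_compl _ _) hμc
    calc μ (ball x t) ≤ μ (ball x t ∩ Ω) + μ (ball x t \ Ω) :=
          measure_le_inter_add_diff μ _ _
      _ = μ (Ω ∩ ball x t) := by rw [h0, add_zero, inter_comm]
      _ ≤ _ := hMor x t ht
  -- pointwise bound on the inner integrand
  have hpt : ∀ (x : EuclideanSpace ℝ (Fin n)), ∀ t ∈ Ioc (0:ℝ) (2*D),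
      (μ (ball x t) / ENNReal.ofReal (t ^ ((n:ℝ) - p))) ^ (1/(p-1)) * ENNReal.ofReal t⁻¹
        ≤ ENNReal.ofReal (M^(1/(p-1)) * t^(β-1)) := by
    intro x t ht
    have ht0 : 0 < t := ht.1
    have htp : (0:ℝ) < t ^ ((n:ℝ)-p) := Real.rpow_pos_of_pos ht0 _
    have h1 : (μ (ball x t) / ENNReal.ofReal (t ^ ((n:ℝ)-p))) ^ (1/(p-1))
          * ENNReal.ofReal t⁻¹
        ≤ (ENNReal.ofReal (M * t^a) / ENNReal.ofReal (t ^ ((n:ℝ)-p))) ^ (1/(p-1))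
          * ENNReal.ofReal t⁻¹ :=
      mul_le_mul_left
        (ENNReal.rpow_le_rpow (ENNReal.div_le_div_right (hballbd x t ht0) _)
          (by positivity)) _
    refine h1.trans_eq ?_
    rw [← ENNReal.ofReal_div_of_pos htp,
        ENNReal.ofReal_rpow_of_nonneg (by positivity) (by positivity),
        ← ENNReal.ofReal_mul (by positivity)]
    congr 1
    have hc : a - ((n:ℝ)-p) = p - (n:ℝ)/qr := by rw [ha]; ring
    rw [mul_div_assoc, ← Real.rpow_sub ht0,
        Real.mul_rpow hM (Real.rpow_nonneg ht0.le _),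
        ← Real.rpow_mul ht0.le, hc, mul_one_div, ← hβdef,
        Real.rpow_sub ht0 β 1, Real.rpow_one]
    ring
  -- the inner integral bound
  have hint : IntegrableOn (fun t : ℝ => M^(1/(p-1)) * t^(β-1)) (Ioc 0 (2*D)) := by
    rw [← intervalIntegrable_iff_integrableOn_Ioc_of_le h2D.le]
    exact (intervalIntegral.intervalIntegrable_rpow' (by linarith)).const_mul _
  have hinner : ∀ x : EuclideanSpace ℝ (Fin n),
      (∫⁻ t in Ioc (0:ℝ) (2*D),
        (μ (ball x t) / ENNReal.ofReal (t ^ ((n:ℝ) - p))) ^ (1/(p-1)) * ENNReal.ofReal t⁻¹)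
        ≤ ENNReal.ofReal (M^(1/(p-1)) * ((2*D)^β/β)) := by
    intro x
    calc (∫⁻ t in Ioc (0:ℝ) (2*D),
        (μ (ball x t) / ENNReal.ofReal (t ^ ((n:ℝ) - p))) ^ (1/(p-1)) * ENNReal.ofReal t⁻¹)
        ≤ ∫⁻ t in Ioc (0:ℝ) (2*D), ENNReal.ofReal (M^(1/(p-1)) * t^(β-1)) :=
          setLIntegral_mono (by fun_prop) (hpt x)
      _ = ENNReal.ofReal (∫ t in Ioc (0:ℝ) (2*D), M^(1/(p-1)) * t^(β-1)) := by
          rw [← ofReal_integral_eq_lintegral_ofReal hint ?_]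
          filter_upwards [ae_restrict_mem measurableSet_Ioc] with t ht
          exact mul_nonneg (Real.rpow_nonneg hM _) (Real.rpow_nonneg ht.1.le _)
      _ = ENNReal.ofReal (M^(1/(p-1)) * ((2*D)^β/β)) := by
          congr 1
          rw [← intervalIntegral.integral_of_le h2D.le,
              intervalIntegral.integral_const_mul,
              integral_rpow (Or.inl (by linarith : (-1:ℝ) < β - 1))]
          have hβ1 : β - 1 + 1 = β := by ring
          rw [hβ1, Real.zero_rpow hβ.ne', sub_zero]
  -- assemble
  calc ∫⁻ x in Ω,
          (∫⁻ t in Ioc (0:ℝ) (2*D),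
            (μ (ball x t) / ENNReal.ofReal (t ^ ((n:ℝ) - p))) ^ (1/(p-1))
              * ENNReal.ofReal t⁻¹) ∂μ
      ≤ ∫⁻ _ in Ω, ENNReal.ofReal (M^(1/(p-1)) * ((2*D)^β/β)) ∂μ :=
        lintegral_mono fun x => hinner x
    _ = ENNReal.ofReal (M^(1/(p-1)) * ((2*D)^β/β)) * μ Ω := setLIntegral_const _ _
    _ ≤ ENNReal.ofReal (M^(1/(p-1)) * ((2*D)^β/β)) * ENNReal.ofReal (M * (2*D)^a) :=
        mul_le_mul_right hμΩ _
    _ = ENNReal.ofReal ((M^(1/(p-1)) * ((2*D)^β/β)) * (M * (2*D)^a)) :=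
        (ENNReal.ofReal_mul (by positivity)).symm
    _ ≤ _ := by
        apply ENNReal.ofReal_le_ofReal
        apply le_of_eq
        rcases eq_or_lt_of_le hM with hM0 | hM0
        · rw [← hM0, Real.zero_rpow (by positivity : (0:ℝ) < 1/(p-1)).ne',
              Real.zero_rpow (by positivity : (0:ℝ) < p/(p-1)).ne']
          ring
        · have h1 : M^(1/(p-1)) * M = M^(p/(p-1)) := by
            rw [show p/(p-1) = 1/(p-1) + 1 by field_simp; ring, Real.rpow_add hM0, Real.rpow_one]
          have h2 : (2*D)^β * (2*D)^a = (2*D)^E := by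
            rw [← Real.rpow_add h2D, hβE]
          have h3 : (2*D)^E = 2^E * D^E := Real.mul_rpow (by norm_num) hDpos.le
          calc M^(1/(p-1)) * ((2*D)^β/β) * (M * (2*D)^a)
              = (M^(1/(p-1)) * M) * ((2*D)^β * (2*D)^a) / β := by ring
            _ = M^(p/(p-1)) * (2^E * D^E) / β := by rw [h1, h2, h3]
            _ = 2^E/β * M^(p/(p-1)) * D^E := by ring
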